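/- Let the three-user-pair deterministic interference channel be fixed. Define the treating-interference-as-noise region ℛ_TIN as the set of all triples (R₁,R₂,R₃) of nonnegative reals for which there exists an admissible input (Q,X₁,X₂,X₃) such that R_k < I(X_k;Y_k|Q) for k = 1,2,3. Define the interference-decoding region ℛ_ID as the set of all triples (R₁,R₂,R₃) of nonnegative reals for which there exists an admissible input (Q,X₁,X₂,X₃) such that all of the following twelve inequalities hold: (receiver 1) R₁ < H(X₁₁|Q); R₁ + min{R₂, H(X₂₁|Q)} < H(Y₁|X₃₁,Q); R₁ + min{R₃, H(X₃₁|Q)} < H(Y₁|X₂₁,Q); R₁ + min{R₂+R₃, R₂+H(X₃₁|Q), H(X₂₁|Q)+R₃, H(S₁|Q)} < H(Y₁|Q); (receiver 2) R₂ < H(X₂₂|Q); R₂ + min{R₃, H(X₃₂|Q)} < H(Y₂|X₁₂,Q); R₂ + min{R₁, H(X₁₂|Q)} < H(Y₂|X₃₂,Q); R₂ + min{R₃+R₁, R₃+H(X₁₂|Q), H(X₃₂|Q)+R₁, H(S₂|Q)} < H(Y₂|Q); (receiver 3) R₃ < H(X₃₃|Q); R₃ + min{R₁, H(X₁₃|Q)}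 < H(Y₃|X₂₃,Q); R₃ + min{R₂, H(X₂₃|Q)} < H(Y₃|X₁₃,Q); R₃ + min{R₁+R₂, R₁+H(X₂₃|Q), H(X₁₃|Q)+R₂, H(S₃|Q)} < H(Y₃|Q). Then ℛ_TIN ⊆ ℛ_ID. -/

import Mathlib

open scoped Classical
open Finset

/-- A probability mass function on a finite sample space, given as a real-valued
weight function that is nonnegative and sums to one. -/
structure FinPMF (Ω : Type) where
  [fin : Fintype Ω]
  p : Ω → ℝ
  nonneg : ∀ ω, 0 ≤ p ω
  sum_one : ∑ ω, p ω = 1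

/-- Probability of an event. -/
noncomputable def prE {Ω : Type} (μ : FinPMF Ω) (E : Ω → Prop) : ℝ :=
  letI := μ.fin
  ∑ ω, if E ω then μ.p ω else 0

/-- Probability that the random variable `X` takes the value `x`. -/
noncomputable def prX {Ω α : Type} (μ : FinPMF Ω) (X : Ω → α) (x : α) : ℝ :=
  prE μ (fun ω => X ω = x)

/-- Shannon entropy (base 2) of a random variable on a finite probability space. -/
noncomputable def entH {Ω α : Type} (μ : FinPMF Ω) (X : Ω → α) : ℝ :=
  letI := μ.fin;
  -∑ x ∈ Finset.univ.image X, prX μ X x * Real.logb 2 (prX μ X x)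

/-- Conditional entropy `H(X | Y)` (base 2). -/
noncomputable def condH {Ω α β : Type} (μ : FinPMF Ω) (X : Ω → α) (Y : Ω → β) : ℝ :=
  entH μ (fun ω => (X ω, Y ω)) - entH μ Y

/-- Conditional mutual information `I(X ; Y | Q)` (base 2). -/
noncomputable def condMI {Ω α β γ : Type} (μ : FinPMF Ω) (X : Ω → α) (Y : Ω → β)
    (Q : Ω → γ) : ℝ :=
  condH μ X Q + condH μ Y Q - condH μ (fun ω => (X ω, Y ω)) Q

/-- A two-argument function is one-to-one in each argument. -/
def OneToOne {A B C : Type} (f : A → B → C) : Prop :=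
  (∀ b, Function.Injective fun a => f a b) ∧ ∀ a, Function.Injective (f a)

/-- Conditional pmf `p_{X|U}(x|u)`. -/
noncomputable def condP {Ω α γ : Type} (μ : FinPMF Ω) (X : Ω → α) (U : Ω → γ)
    (x : α) (u : γ) : ℝ :=
  prE μ (fun ω => X ω = x ∧ U ω = u) / prX μ U u

/-- Independence of two random variables. -/
def IndepFun {Ω α β : Type} (μ : FinPMF Ω) (X : Ω → α) (S : Ω → β) : Prop :=
  ∀ x s, prE μ (fun ω => X ω = x ∧ S ω = s) = prX μ X x * prX μ S s

/-- Conditional independence of `A` and `B` given `Z`: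
for every `z` with `P(Z = z) > 0`, `P(A = a, B = b | Z = z) = P(A = a | Z = z) P(B = b | Z = z)`. -/
def CondIndepFun {Ω α β γ : Type} (μ : FinPMF Ω) (A : Ω → α) (B : Ω → β) (Z : Ω → γ) : Prop :=
  ∀ a b z, 0 < prX μ Z z →
    prE μ (fun ω => A ω = a ∧ B ω = b ∧ Z ω = z) / prX μ Z z =
      (prE μ (fun ω => A ω = a ∧ Z ω = z) / prX μ Z z) *
        (prE μ (fun ω => B ω = b ∧ Z ω = z) / prX μ Z z)

/-- Mutual conditional independence of `X₁, X₂, X₃` given `Q`: the joint conditional pmf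
factors into the product of the conditional marginals. -/
def CondIndepFun3 {Ω α₁ α₂ α₃ γ : Type} (μ : FinPMF Ω)
    (X₁ : Ω → α₁) (X₂ : Ω → α₂) (X₃ : Ω → α₃) (Q : Ω → γ) : Prop :=
  ∀ x₁ x₂ x₃ q, 0 < prX μ Q q →
    prE μ (fun ω => X₁ ω = x₁ ∧ X₂ ω = x₂ ∧ X₃ ω = x₃ ∧ Q ω = q) / prX μ Q q =
      (prE μ (fun ω => X₁ ω = x₁ ∧ Q ω = q) / prX μ Q q) *
        (prE μ (fun ω => X₂ ω = x₂ ∧ Q ω = q) / prX μ Q q) *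
        (prE μ (fun ω => X₃ ω = x₃ ∧ Q ω = q) / prX μ Q q)

/-- The ε-typical set (sequences whose empirical pmf is within a relative ε of `p`). -/
def Typical {𝒳 : Type} [Fintype 𝒳] (p : 𝒳 → ℝ) (ε : ℝ) (n : ℕ) (xs : Fin n → 𝒳) : Prop :=
  ∀ x : 𝒳, |((Finset.univ.filter fun i => xs i = x).card : ℝ) / n - p x| ≤ ε * p x

/-- The number of codewords `⌈2^{nR}⌉` at rate `R` and blocklength `n`. -/
noncomputable def codeSize (R : ℝ) (n : ℕ) : ℕ := ⌈(2 : ℝ) ^ ((n : ℝ) * R)⌉₊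

namespace TINAux

variable {Ω α β γ δ : Type}

noncomputable def esum (μ : FinPMF Ω) (f : Ω → ℝ) : ℝ :=
  @Finset.sum Ω ℝ _ (@Finset.univ Ω μ.fin) f

lemma esum_sum_one (μ : FinPMF Ω) : esum μ μ.p = 1 := μ.sum_one

lemma prE_eq (μ : FinPMF Ω) (E : Ω → Prop) :
    prE μ E = esum μ (fun ω => if E ω then μ.p ω else 0) := rfl

lemma prE_nonneg (μ : FinPMF Ω) (E : Ω → Prop) : 0 ≤ prE μ E := by
  letI := μ.fin
  refine Finset.sum_nonneg fun ω _ => ?_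
  split <;> simp [μ.nonneg]

lemma prE_congr (μ : FinPMF Ω) {E F : Ω → Prop} (h : ∀ ω, E ω ↔ F ω) :
    prE μ E = prE μ F := by
  letI := μ.fin
  refine Finset.sum_congr rfl fun ω _ => ?_
  simp [h ω]

lemma prE_mono (μ : FinPMF Ω) {E F : Ω → Prop} (h : ∀ ω, E ω → F ω) :
    prE μ E ≤ prE μ F := by
  letI := μ.fin
  refine Finset.sum_le_sum fun ω _ => ?_
  by_cases hE : E ω
  · simp [hE, h ω hE]
  · simp only [hE, if_false]
    split <;> simp [μ.nonneg]

lemma prX_nonneg (μ : FinPMF Ω) (X : Ω → α) (x : α) : 0 ≤ prX μ X x :=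
  prE_nonneg μ _

lemma p_le_prE (μ : FinPMF Ω) {E : Ω → Prop} {ω0 : Ω} (h : E ω0) :
    μ.p ω0 ≤ prE μ E := by
  letI := μ.fin
  have : μ.p ω0 = if E ω0 then μ.p ω0 else 0 := by simp [h]
  rw [this]
  refine Finset.single_le_sum (f := fun ω => if E ω then μ.p ω else 0) (fun ω _ => ?_) (Finset.mem_univ ω0)
  split <;> simp [μ.nonneg]

lemma p_le_prX (μ : FinPMF Ω) (X : Ω → α) (ω0 : Ω) :
    μ.p ω0 ≤ prX μ X (X ω0) := p_le_prE μ rfl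

lemma prE_sum_fiber [Fintype υ] (μ : FinPMF Ω) (E : Ω → Prop) (U : Ω → υ) :
    prE μ E = ∑ u : υ, prE μ (fun ω => E ω ∧ U ω = u) := by
  letI := μ.fin
  simp only [prE]
  rw [Finset.sum_comm]
  refine Finset.sum_congr rfl fun ω _ => ?_
  by_cases hE : E ω
  · simp [hE]
  · simp [hE]

lemma sum_prX_filter (μ : FinPMF Ω) (X : Ω → α) (x : α) :
    prX μ X x = ∑ ω ∈ (@Finset.univ Ω μ.fin).filter (fun ω => X ω = x), μ.p ω := by
  letI := μ.fin
  simp only [prX, prE]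
  rw [Finset.sum_filter]

lemma prX_eq_sum (μ : FinPMF Ω) (X : Ω → α) (x : α) (D : ∀ ω, Decidable (X ω = x)) :
    prX μ X x = ∑ ω ∈ @Finset.univ Ω μ.fin, (@ite ℝ (X ω = x) (D ω) (μ.p ω) 0) := by
  rw [show prX μ X x = prE μ (fun ω => X ω = x) from rfl, prE_eq]
  simp only [esum]
  refine Finset.sum_congr rfl fun ω _ => ?_
  by_cases h : X ω = x <;> simp [h]

end TINAux
namespace TINAux

variable {Ω α β γ δ : Type}

lemma prX_eq_prX_of_partition (μ : FinPMF Ω) {X : Ω → α} {X' : Ω → β}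
    (h : ∀ ω ω', X ω = X ω' ↔ X' ω = X' ω') (ω0 : Ω) :
    prX μ X (X ω0) = prX μ X' (X' ω0) :=
  prE_congr μ fun ω => h ω ω0

lemma entH_eq (μ : FinPMF Ω) (X : Ω → α) :
    entH μ X = - esum μ (fun ω => μ.p ω * Real.logb 2 (prX μ X (X ω))) := by
  letI := μ.fin
  simp only [entH, esum, neg_inj]
  rw [← Finset.sum_fiberwise_of_maps_to (g := X) (t := Finset.univ.image X)
      (fun ω _ => Finset.mem_image_of_mem X (Finset.mem_univ ω))]
  refine Finset.sum_congr rfl fun x hx => ?_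
  rw [sum_prX_filter, Finset.sum_mul]
  refine Finset.sum_congr rfl fun ω hω => ?_
  have h2 : X ω = x := (Finset.mem_filter.mp hω).2
  rw [h2, ← sum_prX_filter]

lemma entH_congr (μ : FinPMF Ω) {X : Ω → α} {X' : Ω → β}
    (h : ∀ ω ω', X ω = X ω' ↔ X' ω = X' ω') :
    entH μ X = entH μ X' := by
  rw [entH_eq, entH_eq]
  letI := μ.fin
  refine congrArg Neg.neg (Finset.sum_congr rfl fun ω _ => ?_)
  rw [prX_eq_prX_of_partition μ h ω]

lemma entH_le_refine (μ : FinPMF Ω) {X : Ω → α} {Y : Ω → β}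
    (h : ∀ ω ω', X ω = X ω' → Y ω = Y ω') :
    entH μ Y ≤ entH μ X := by
  rw [entH_eq, entH_eq]
  letI := μ.fin
  refine neg_le_neg (Finset.sum_le_sum fun ω _ => ?_)
  rcases eq_or_lt_of_le (μ.nonneg ω) with h0 | h0
  · rw [← h0]; simp
  · refine mul_le_mul_of_nonneg_left ?_ (le_of_lt h0)
    exact Real.logb_le_logb_of_le one_lt_two (lt_of_lt_of_le h0 (p_le_prX μ X ω))
      (prE_mono μ fun ω' hw => h ω' ω hw)

end TINAux
namespace TINAux

variable {Ω α β γ δ κ : Type}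

/-- Multiplicative form of conditional independence. -/
def MultIndep (μ : FinPMF Ω) (U : Ω → α) (V : Ω → β) (Z : Ω → γ) : Prop :=
  ∀ u v z, prE μ (fun ω => U ω = u ∧ V ω = v ∧ Z ω = z) * prX μ Z z =
    prE μ (fun ω => U ω = u ∧ Z ω = z) * prE μ (fun ω => V ω = v ∧ Z ω = z)

lemma esum_le (μ : FinPMF Ω) {f g : Ω → ℝ} (h : ∀ ω, f ω ≤ g ω) :
    esum μ f ≤ esum μ g := by
  letI := μ.fin
  exact Finset.sum_le_sum fun ω _ => h ω

lemma esum_sub (μ : FinPMF Ω) (f g : Ω → ℝ) :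
    esum μ (fun ω => f ω - g ω) = esum μ f - esum μ g := by
  letI := μ.fin
  exact Finset.sum_sub_distrib f g

lemma esum_const_mul (μ : FinPMF Ω) (c : ℝ) (f : Ω → ℝ) :
    esum μ (fun ω => c * f ω) = c * esum μ f := by
  letI := μ.fin
  exact (Finset.mul_sum _ _ _).symm

lemma condMI_eq_esum (μ : FinPMF Ω) (X : Ω → α) (Y : Ω → β) (Z : Ω → γ) :
    condMI μ X Y Z =
      esum μ (fun ω =>
        μ.p ω * Real.logb 2 (prX μ (fun ω' => ((X ω', Y ω'), Z ω')) ((X ω, Y ω), Z ω))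
        + μ.p ω * Real.logb 2 (prX μ Z (Z ω))
        - μ.p ω * Real.logb 2 (prX μ (fun ω' => (X ω', Z ω')) (X ω, Z ω))
        - μ.p ω * Real.logb 2 (prX μ (fun ω' => (Y ω', Z ω')) (Y ω, Z ω))) := by
  letI := μ.fin
  simp only [condMI, condH, entH_eq, esum]
  rw [Finset.sum_sub_distrib, Finset.sum_sub_distrib, Finset.sum_add_distrib]
  ring

lemma prX_pair_eq (μ : FinPMF Ω) (X : Ω → α) (Z : Ω → γ) (x : α) (z : γ) :
    prX μ (fun ω => (X ω, Z ω)) (x, z) = prE μ (fun ω => X ω = x ∧ Z ω = z) :=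
  prE_congr μ fun ω => by simp [Prod.ext_iff]

lemma prX_triple_eq (μ : FinPMF Ω) (X : Ω → α) (Y : Ω → β) (Z : Ω → γ) (x : α) (y : β) (z : γ) :
    prX μ (fun ω => ((X ω, Y ω), Z ω)) ((x, y), z) =
      prE μ (fun ω => X ω = x ∧ Y ω = y ∧ Z ω = z) :=
  prE_congr μ fun ω => by simp [Prod.ext_iff, and_assoc]

lemma condMI_eq_zero_of_indep (μ : FinPMF Ω) {X : Ω → α} {Y : Ω → β} {Z : Ω → γ}
    (hind : MultIndep μ X Y Z) : condMI μ X Y Z = 0 := by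
  rw [condMI_eq_esum]
  letI := μ.fin
  refine Finset.sum_eq_zero fun ω _ => ?_
  rcases eq_or_lt_of_le (μ.nonneg ω) with h0 | h0
  · rw [← h0]; ring
  · have hW : 0 < prX μ (fun ω' => ((X ω', Y ω'), Z ω')) ((X ω, Y ω), Z ω) :=
      lt_of_lt_of_le h0 (p_le_prX μ _ ω)
    have hZ : 0 < prX μ Z (Z ω) := lt_of_lt_of_le h0 (p_le_prX μ Z ω)
    have hXZ : 0 < prX μ (fun ω' => (X ω', Z ω')) (X ω, Z ω) :=
      lt_of_lt_of_le h0 (p_le_prX μ _ ω)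
    have hYZ : 0 < prX μ (fun ω' => (Y ω', Z ω')) (Y ω, Z ω) :=
      lt_of_lt_of_le h0 (p_le_prX μ _ ω)
    have key : prX μ (fun ω' => ((X ω', Y ω'), Z ω')) ((X ω, Y ω), Z ω) * prX μ Z (Z ω) =
        prX μ (fun ω' => (X ω', Z ω')) (X ω, Z ω) * prX μ (fun ω' => (Y ω', Z ω')) (Y ω, Z ω) := by
      rw [prX_triple_eq, prX_pair_eq, prX_pair_eq]
      exact hind (X ω) (Y ω) (Z ω)
    have hlog : Real.logb 2 (prX μ (fun ω' => ((X ω', Y ω'), Z ω')) ((X ω, Y ω), Z ω))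
        + Real.logb 2 (prX μ Z (Z ω))
        - (Real.logb 2 (prX μ (fun ω' => (X ω', Z ω')) (X ω, Z ω))
          + Real.logb 2 (prX μ (fun ω' => (Y ω', Z ω')) (Y ω, Z ω))) = 0 := by
      rw [← Real.logb_mul hW.ne' hZ.ne', ← Real.logb_mul hXZ.ne' hYZ.ne', key]
      ring
    nlinarith [hlog]

lemma sum_prX_image [DecidableEq α] (μ : FinPMF Ω) (X : Ω → α) :
    ∑ x ∈ (@Finset.univ Ω μ.fin).image X, prX μ X x = 1 := by
  letI := μ.fin
  rw [← μ.sum_one,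
    ← Finset.sum_fiberwise_of_maps_to (g := X) (t := Finset.univ.image X)
      (fun ω _ => Finset.mem_image_of_mem X (Finset.mem_univ ω))]
  refine Finset.sum_congr rfl fun x _ => ?_
  rw [Finset.sum_filter]
  exact prX_eq_sum μ X x _

lemma prX_pair_le_snd (μ : FinPMF Ω) (Y : Ω → β) (Z : Ω → γ) (v : β × γ) :
    prX μ (fun ω => (Y ω, Z ω)) v ≤ prX μ Z v.2 :=
  prE_mono μ fun ω h => congrArg Prod.snd h

lemma esum_fiber [DecidableEq κ] (μ : FinPMF Ω) (W : Ω → κ) (F : κ → ℝ) :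
    ∑ t ∈ (@Finset.univ Ω μ.fin).image W, prX μ W t * F t =
      esum μ (fun ω => μ.p ω * F (W ω)) := by
  letI := μ.fin
  simp only [esum]
  have h1 : ∀ t, prX μ W t * F t = ∑ ω, if W ω = t then μ.p ω * F t else 0 := by
    intro t
    rw [prX_eq_sum μ W t (fun _ => inferInstance), Finset.sum_mul]
    exact Finset.sum_congr rfl fun ω _ => by split <;> simp
  rw [Finset.sum_congr rfl fun t _ => h1 t, Finset.sum_comm]
  refine Finset.sum_congr rfl fun ω _ => ?_
  rw [Finset.sum_eq_single (W ω)]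
  · simp
  · intro t _ ht; exact if_neg fun h => ht h.symm
  · intro h; exact absurd (Finset.mem_image_of_mem W (Finset.mem_univ ω)) h

lemma marginal_snd [DecidableEq β] [DecidableEq γ] (μ : FinPMF Ω) (Y : Ω → β) (Z : Ω → γ) (z : γ) :
    ∑ v ∈ (@Finset.univ Ω μ.fin).image (fun ω => (Y ω, Z ω)),
      (if v.2 = z then prX μ (fun ω => (Y ω, Z ω)) v else 0) = prX μ Z z := by
  letI := μ.fin
  have h1 : ∀ v : β × γ,
      (if v.2 = z then prX μ (fun ω => (Y ω, Z ω)) v else 0) =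
        ∑ ω, if (Y ω, Z ω) = v ∧ Z ω = z then μ.p ω else 0 := by
    intro v
    by_cases hz : v.2 = z
    · rw [if_pos hz, prX_eq_sum μ _ v (fun _ => Classical.propDecidable _)]
      refine Finset.sum_congr rfl fun ω _ => ?_
      by_cases hv : (Y ω, Z ω) = v
      · have hzz : Z ω = z := by rw [← hz, ← hv]
        simp [hv, hzz]
      · simp [hv]
    · rw [if_neg hz]
      refine (Finset.sum_eq_zero fun ω _ => ?_).symm
      by_cases hv : (Y ω, Z ω) = v
      · have hzz : ¬ Z ω = z := by rw [← hv] at hz; exact hz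
        simp [hv, hzz]
      · simp [hv]
  rw [Finset.sum_congr rfl fun v _ => h1 v, Finset.sum_comm,
    prX_eq_sum μ Z z (fun _ => Classical.propDecidable _)]
  refine Finset.sum_congr rfl fun ω _ => ?_
  rw [Finset.sum_eq_single ((Y ω, Z ω))]
  · by_cases h : Z ω = z <;> simp [h]
  · intro t _ ht
    exact if_neg fun h => ht h.1.symm
  · intro h; exact absurd (Finset.mem_image_of_mem _ (Finset.mem_univ ω)) h

end TINAux
namespace TINAux

variable {Ω α β γ : Type}

lemma gibbs_key (μ : FinPMF Ω) (X : Ω → α) (Y : Ω → β) (Z : Ω → γ) :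
    esum μ (fun ω => μ.p ω *
      (prX μ (fun ω' => (X ω', Z ω')) (X ω, Z ω) * prX μ (fun ω' => (Y ω', Z ω')) (Y ω, Z ω) /
       (prX μ (fun ω' => ((X ω', Y ω'), Z ω')) ((X ω, Y ω), Z ω) * prX μ Z (Z ω)))) ≤ 1 := by
  letI := μ.fin
  set q1 : α × γ → ℝ := prX μ (fun ω => (X ω, Z ω)) with hq1
  set q2 : β × γ → ℝ := prX μ (fun ω => (Y ω, Z ω)) with hq2
  set qW : (α × β) × γ → ℝ := prX μ (fun ω => ((X ω, Y ω), Z ω)) with hqW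
  set qZ : γ → ℝ := prX μ Z with hqZ
  set W : Ω → (α × β) × γ := fun ω => ((X ω, Y ω), Z ω) with hWdef
  set F : (α × β) × γ → ℝ :=
    fun t => q1 (t.1.1, t.2) * q2 (t.1.2, t.2) / (qW t * qZ t.2) with hF
  set G : (α × γ) × (β × γ) → ℝ :=
    fun p => if p.2.2 = p.1.2 then q1 p.1 * q2 p.2 / qZ p.1.2 else 0 with hG
  set e : (α × β) × γ → (α × γ) × (β × γ) := fun t => ((t.1.1, t.2), (t.1.2, t.2)) with he
  have hq1nn : ∀ u, 0 ≤ q1 u := fun u => prX_nonneg μ _ u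
  have hq2nn : ∀ u, 0 ≤ q2 u := fun u => prX_nonneg μ _ u
  have hqWnn : ∀ u, 0 ≤ qW u := fun u => prX_nonneg μ _ u
  have hqZnn : ∀ u, 0 ≤ qZ u := fun u => prX_nonneg μ _ u
  have step0 : esum μ (fun ω => μ.p ω *
      (prX μ (fun ω' => (X ω', Z ω')) (X ω, Z ω) * prX μ (fun ω' => (Y ω', Z ω')) (Y ω, Z ω) /
       (prX μ (fun ω' => ((X ω', Y ω'), Z ω')) ((X ω, Y ω), Z ω) * prX μ Z (Z ω)))) =
      ∑ t ∈ Finset.univ.image W, qW t * F t := (esum_fiber μ W F).symm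
  rw [step0]
  calc ∑ t ∈ Finset.univ.image W, qW t * F t
      ≤ ∑ t ∈ Finset.univ.image W, q1 (t.1.1, t.2) * q2 (t.1.2, t.2) / qZ t.2 := by
        refine Finset.sum_le_sum fun t _ => ?_
        rcases eq_or_lt_of_le (hqWnn t) with h0 | h0
        · rw [← h0, zero_mul]
          exact div_nonneg (mul_nonneg (hq1nn _) (hq2nn _)) (hqZnn _)
        · have hZ0 : 0 < qZ t.2 := by
            refine lt_of_lt_of_le h0 ?_
            exact prE_mono μ fun ω h => congrArg Prod.snd h
          refine le_of_eq ?_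
          rw [hF]
          field_simp
    _ = ∑ t ∈ Finset.univ.image W, G (e t) := by
        refine Finset.sum_congr rfl fun t _ => ?_
        exact (if_pos rfl).symm
    _ = ∑ p ∈ (Finset.univ.image W).image e, G p := by
        refine (Finset.sum_image ?_).symm
        intro t1 _ t2 _ h
        obtain ⟨⟨a1, b1⟩, c1⟩ := t1
        obtain ⟨⟨a2, b2⟩, c2⟩ := t2
        simp only [he, Prod.mk.injEq] at h ⊢
        tauto
    _ ≤ ∑ p ∈ (Finset.univ.image (fun ω => (X ω, Z ω))) ×ˢ (Finset.univ.image (fun ω => (Y ω, Z ω))),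
          G p := by
        refine Finset.sum_le_sum_of_subset_of_nonneg ?_ (fun p _ _ => ?_)
        · intro p hp
          obtain ⟨t, ht, rfl⟩ := Finset.mem_image.mp hp
          obtain ⟨ω, _, rfl⟩ := Finset.mem_image.mp ht
          exact Finset.mem_product.mpr
            ⟨Finset.mem_image_of_mem _ (Finset.mem_univ ω),
             Finset.mem_image_of_mem _ (Finset.mem_univ ω)⟩
        · rw [hG]
          dsimp only
          split
          · exact div_nonneg (mul_nonneg (hq1nn _) (hq2nn _)) (hqZnn _)
          · exact le_refl 0
    _ = ∑ u ∈ Finset.univ.image (fun ω => (X ω, Z ω)),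
          ∑ v ∈ Finset.univ.image (fun ω => (Y ω, Z ω)), G (u, v) := by rw [Finset.sum_product]
    _ = ∑ u ∈ Finset.univ.image (fun ω => (X ω, Z ω)), q1 u := by
        refine Finset.sum_congr rfl fun u _ => ?_
        have hfac : ∀ v : β × γ, G (u, v) = (q1 u / qZ u.2) * (if v.2 = u.2 then q2 v else 0) := by
          intro v
          rw [hG]
          dsimp only
          by_cases h : v.2 = u.2
          · rw [if_pos h, if_pos h]; ring
          · rw [if_neg h, if_neg h, mul_zero]
        rw [Finset.sum_congr rfl fun v _ => hfac v, ← Finset.mul_sum, marginal_snd μ Y Z u.2]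
        rcases eq_or_lt_of_le (hqZnn u.2) with h0 | h0
        · have h2 := prX_pair_le_snd μ X Z u
          rw [← hq1, ← hqZ] at h2
          have h1 : q1 u = 0 := by linarith [hq1nn u, h0.le]
          rw [h1]
          simp
        · rw [div_mul_cancel₀ _ h0.ne']
    _ = 1 := sum_prX_image μ (fun ω => (X ω, Z ω))

lemma condMI_nonneg (μ : FinPMF Ω) (X : Ω → α) (Y : Ω → β) (Z : Ω → γ) :
    0 ≤ condMI μ X Y Z := by
  rw [condMI_eq_esum]
  have key := gibbs_key μ X Y Z
  have hlog2 : (0:ℝ) < Real.log 2 := Real.log_pos one_lt_two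
  have h1 : ∀ ω, (1 / Real.log 2) *
      (μ.p ω - μ.p ω *
        (prX μ (fun ω' => (X ω', Z ω')) (X ω, Z ω) * prX μ (fun ω' => (Y ω', Z ω')) (Y ω, Z ω) /
         (prX μ (fun ω' => ((X ω', Y ω'), Z ω')) ((X ω, Y ω), Z ω) * prX μ Z (Z ω)))) ≤
      μ.p ω * Real.logb 2 (prX μ (fun ω' => ((X ω', Y ω'), Z ω')) ((X ω, Y ω), Z ω))
      + μ.p ω * Real.logb 2 (prX μ Z (Z ω))
      - μ.p ω * Real.logb 2 (prX μ (fun ω' => (X ω', Z ω')) (X ω, Z ω))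
      - μ.p ω * Real.logb 2 (prX μ (fun ω' => (Y ω', Z ω')) (Y ω, Z ω)) := by
    intro ω
    rcases eq_or_lt_of_le (μ.nonneg ω) with h0 | h0
    · rw [← h0]; simp
    · have hW : 0 < prX μ (fun ω' => ((X ω', Y ω'), Z ω')) ((X ω, Y ω), Z ω) :=
        lt_of_lt_of_le h0 (p_le_prX μ _ ω)
      have hZ : 0 < prX μ Z (Z ω) := lt_of_lt_of_le h0 (p_le_prX μ Z ω)
      have hXZ : 0 < prX μ (fun ω' => (X ω', Z ω')) (X ω, Z ω) :=
        lt_of_lt_of_le h0 (p_le_prX μ _ ω)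
      have hYZ : 0 < prX μ (fun ω' => (Y ω', Z ω')) (Y ω, Z ω) :=
        lt_of_lt_of_le h0 (p_le_prX μ _ ω)
      set s : ℝ := prX μ (fun ω' => (X ω', Z ω')) (X ω, Z ω) * prX μ (fun ω' => (Y ω', Z ω')) (Y ω, Z ω) /
          (prX μ (fun ω' => ((X ω', Y ω'), Z ω')) ((X ω, Y ω), Z ω) * prX μ Z (Z ω)) with hs
      have hspos : 0 < s := by
        rw [hs]; positivity
      have hlogs : Real.logb 2 s ≤ (s - 1) / Real.log 2 := by
        rw [Real.logb, div_le_div_iff_of_pos_right hlog2]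
        exact Real.log_le_sub_one_of_pos hspos
      have hdecomp : Real.logb 2 s =
          Real.logb 2 (prX μ (fun ω' => (X ω', Z ω')) (X ω, Z ω))
          + Real.logb 2 (prX μ (fun ω' => (Y ω', Z ω')) (Y ω, Z ω))
          - Real.logb 2 (prX μ (fun ω' => ((X ω', Y ω'), Z ω')) ((X ω, Y ω), Z ω))
          - Real.logb 2 (prX μ Z (Z ω)) := by
        rw [hs, Real.logb_div (by positivity) (by positivity),
          Real.logb_mul hXZ.ne' hYZ.ne', Real.logb_mul hW.ne' hZ.ne']
        ring
      have hmul := mul_le_mul_of_nonneg_left hlogs h0.le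
      rw [hdecomp] at hmul
      have heq : μ.p ω * ((s - 1) / Real.log 2) = (1 / Real.log 2) * (μ.p ω * s - μ.p ω) := by
        field_simp
      rw [heq] at hmul
      linarith [hmul]
  have h2 : esum μ (fun ω => (1 / Real.log 2) *
      (μ.p ω - μ.p ω *
        (prX μ (fun ω' => (X ω', Z ω')) (X ω, Z ω) * prX μ (fun ω' => (Y ω', Z ω')) (Y ω, Z ω) /
         (prX μ (fun ω' => ((X ω', Y ω'), Z ω')) ((X ω, Y ω), Z ω) * prX μ Z (Z ω))))) =
      (1 / Real.log 2) * (1 - esum μ (fun ω => μ.p ω *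
        (prX μ (fun ω' => (X ω', Z ω')) (X ω, Z ω) * prX μ (fun ω' => (Y ω', Z ω')) (Y ω, Z ω) /
         (prX μ (fun ω' => ((X ω', Y ω'), Z ω')) ((X ω, Y ω), Z ω) * prX μ Z (Z ω))))) := by
    rw [esum_const_mul, esum_sub, esum_sum_one]
  have h3 : 0 ≤ (1 / Real.log 2) * (1 - esum μ (fun ω => μ.p ω *
      (prX μ (fun ω' => (X ω', Z ω')) (X ω, Z ω) * prX μ (fun ω' => (Y ω', Z ω')) (Y ω, Z ω) /
       (prX μ (fun ω' => ((X ω', Y ω'), Z ω')) ((X ω, Y ω), Z ω) * prX μ Z (Z ω))))) := by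
    have h4 : (0:ℝ) ≤ 1 / Real.log 2 := by positivity
    nlinarith
  calc (0:ℝ) ≤ _ := h3
  _ = _ := h2.symm
  _ ≤ _ := esum_le μ h1

end TINAux
namespace TINAux

variable {Ω α β γ δ α' β' γ' : Type}

lemma prE_eq_zero (μ : FinPMF Ω) {E : Ω → Prop} (h : ∀ ω, ¬ E ω) : prE μ E = 0 := by
  letI := μ.fin
  exact Finset.sum_eq_zero fun ω _ => if_neg (h ω)

lemma condH_congr (μ : FinPMF Ω) {X : Ω → α} {X' : Ω → α'} {Z : Ω → γ} {Z' : Ω → γ'}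
    (hX : ∀ ω ω', X ω = X ω' ↔ X' ω = X' ω')
    (hZ : ∀ ω ω', Z ω = Z ω' ↔ Z' ω = Z' ω') :
    condH μ X Z = condH μ X' Z' := by
  simp only [condH]
  have e1 : entH μ (fun ω => (X ω, Z ω)) = entH μ (fun ω => (X' ω, Z' ω)) :=
    entH_congr μ fun ω ω' => by simp only [Prod.mk.injEq, hX ω ω', hZ ω ω']
  have e2 : entH μ Z = entH μ Z' := entH_congr μ hZ
  linarith

lemma condH_mono (μ : FinPMF Ω) {X : Ω → α} {Y : Ω → β} (Z : Ω → γ)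
    (h : ∀ ω ω', X ω = X ω' → Y ω = Y ω') :
    condH μ Y Z ≤ condH μ X Z := by
  simp only [condH]
  have := entH_le_refine μ (X := fun ω => (X ω, Z ω)) (Y := fun ω => (Y ω, Z ω))
    (fun ω ω' hh => by
      have h1 : X ω = X ω' := congrArg Prod.fst hh
      have h2 : Z ω = Z ω' := congrArg Prod.snd hh
      rw [Prod.mk.injEq]
      exact ⟨h ω ω' h1, h2⟩)
  linarith

lemma condMI_congr (μ : FinPMF Ω) {X : Ω → α} {X' : Ω → α'} {Y : Ω → β} {Y' : Ω → β'}
    {Q : Ω → γ} {Q' : Ω → γ'}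
    (hX : ∀ ω ω', X ω = X ω' ↔ X' ω = X' ω')
    (hY : ∀ ω ω', Y ω = Y ω' ↔ Y' ω = Y' ω')
    (hQ : ∀ ω ω', Q ω = Q ω' ↔ Q' ω = Q' ω') :
    condMI μ X Y Q = condMI μ X' Y' Q' := by
  simp only [condMI]
  have e1 : condH μ X Q = condH μ X' Q' := condH_congr μ hX hQ
  have e2 : condH μ Y Q = condH μ Y' Q' := condH_congr μ hY hQ
  have e3 : condH μ (fun ω => (X ω, Y ω)) Q = condH μ (fun ω => (X' ω, Y' ω)) Q' :=
    condH_congr μ (fun ω ω' => by simp only [Prod.mk.injEq, hX ω ω', hY ω ω']) hQ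
  linarith

lemma condMI_D2 (μ : FinPMF Ω) (X : Ω → α) (Y : Ω → β) (Z : Ω → γ) :
    condMI μ X Y Z = condH μ Y Z - condH μ Y (fun ω => (X ω, Z ω)) := by
  have h1 : entH μ (fun ω => ((X ω, Y ω), Z ω)) = entH μ (fun ω => (Y ω, (X ω, Z ω))) := by
    refine entH_congr μ fun ω ω' => ?_
    simp only [Prod.mk.injEq]
    tauto
  simp only [condMI, condH]
  linarith [h1]

lemma condMI_chain (μ : FinPMF Ω) (X : Ω → α) (Y : Ω → β) (W : Ω → δ) (Q : Ω → γ) :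
    condMI μ X Y (fun ω => (W ω, Q ω)) =
      condMI μ X (fun ω => (Y ω, W ω)) Q - condMI μ X W Q := by
  have e1 : entH μ (fun ω => (X ω, (W ω, Q ω))) = entH μ (fun ω => ((X ω, W ω), Q ω)) := by
    refine entH_congr μ fun ω ω' => ?_; simp only [Prod.mk.injEq]; tauto
  have e2 : entH μ (fun ω => (Y ω, (W ω, Q ω))) = entH μ (fun ω => ((Y ω, W ω), Q ω)) := by
    refine entH_congr μ fun ω ω' => ?_; simp only [Prod.mk.injEq]; tauto
  have e3 : entH μ (fun ω => ((X ω, Y ω), (W ω, Q ω))) =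
      entH μ (fun ω => ((X ω, (Y ω, W ω)), Q ω)) := by
    refine entH_congr μ fun ω ω' => ?_; simp only [Prod.mk.injEq]; tauto
  simp only [condMI, condH]
  linarith [e1, e2, e3]

lemma condMI_mono (μ : FinPMF Ω) (X : Ω → α) (Y : Ω → β) (W : Ω → δ) (Q : Ω → γ) :
    condMI μ X Y Q ≤ condMI μ X (fun ω => (Y ω, W ω)) Q := by
  have h0 := condMI_nonneg μ X W (fun ω => (Y ω, Q ω))
  have hc := condMI_chain μ X W Y Q
  have hswap : condMI μ X (fun ω => (W ω, Y ω)) Q = condMI μ X (fun ω => (Y ω, W ω)) Q :=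
    condMI_congr μ (fun ω ω' => Iff.rfl)
      (fun ω ω' => by simp only [Prod.mk.injEq]; tauto) (fun ω ω' => Iff.rfl)
  linarith

lemma MultIndep.symm {μ : FinPMF Ω} {U : Ω → α} {V : Ω → β} {Z : Ω → γ}
    (h : MultIndep μ U V Z) : MultIndep μ V U Z := by
  intro v u z
  have h2 := h u v z
  have e : prE μ (fun ω => V ω = v ∧ U ω = u ∧ Z ω = z) =
      prE μ (fun ω => U ω = u ∧ V ω = v ∧ Z ω = z) := prE_congr μ fun ω => by tauto
  rw [e, h2, mul_comm]

lemma condH_drop_of_indep (μ : FinPMF Ω) {U : Ω → α} {V : Ω → β} {Z : Ω → γ}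
    (h : MultIndep μ V U Z) :
    condH μ U (fun ω => (V ω, Z ω)) = condH μ U Z := by
  have h0 := condMI_eq_zero_of_indep μ h
  have h1 := condMI_D2 μ V U Z
  linarith

lemma condH_split_of_indep (μ : FinPMF Ω) {U : Ω → α} {V : Ω → β} {Z : Ω → γ}
    (h : MultIndep μ U V Z) :
    condH μ (fun ω => (U ω, V ω)) Z = condH μ U Z + condH μ V Z := by
  have h0 := condMI_eq_zero_of_indep μ h
  simp only [condMI] at h0
  linarith

lemma MultIndep.comp {υ ν υ' ν' : Type} [Fintype υ] [Fintype ν]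
    {μ : FinPMF Ω} {U : Ω → υ} {V : Ω → ν} {Z : Ω → γ}
    (h : MultIndep μ U V Z) (φ : υ → υ') (ψ : ν → ν') :
    MultIndep μ (fun ω => φ (U ω)) (fun ω => ψ (V ω)) Z := by
  intro a b z
  have hL : prE μ (fun ω => φ (U ω) = a ∧ ψ (V ω) = b ∧ Z ω = z) =
      ∑ u : υ, ∑ v : ν,
        (if φ u = a ∧ ψ v = b then prE μ (fun ω => U ω = u ∧ V ω = v ∧ Z ω = z) else 0) := by
    rw [prE_sum_fiber μ _ U]
    refine Finset.sum_congr rfl fun u _ => ?_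
    rw [prE_sum_fiber μ _ V]
    refine Finset.sum_congr rfl fun v _ => ?_
    by_cases hc : φ u = a ∧ ψ v = b
    · rw [if_pos hc]
      refine prE_congr μ fun ω => ?_
      constructor
      · rintro ⟨⟨⟨_, _, h3⟩, h4⟩, h5⟩
        exact ⟨h4, h5, h3⟩
      · rintro ⟨h1, h2, h3⟩
        exact ⟨⟨⟨by rw [h1]; exact hc.1, by rw [h2]; exact hc.2, h3⟩, h1⟩, h2⟩
    · rw [if_neg hc]
      refine prE_eq_zero μ fun ω => ?_
      rintro ⟨⟨⟨h1, h2, _⟩, h4⟩, h5⟩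
      exact hc ⟨by rw [← h4]; exact h1, by rw [← h5]; exact h2⟩
  have hR1 : prE μ (fun ω => φ (U ω) = a ∧ Z ω = z) =
      ∑ u : υ, (if φ u = a then prE μ (fun ω => U ω = u ∧ Z ω = z) else 0) := by
    rw [prE_sum_fiber μ _ U]
    refine Finset.sum_congr rfl fun u _ => ?_
    by_cases hc : φ u = a
    · rw [if_pos hc]
      refine prE_congr μ fun ω => ?_
      constructor
      · rintro ⟨⟨_, h2⟩, h3⟩; exact ⟨h3, h2⟩
      · rintro ⟨h1, h2⟩; exact ⟨⟨by rw [h1]; exact hc, h2⟩, h1⟩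
    · rw [if_neg hc]
      refine prE_eq_zero μ fun ω => ?_
      rintro ⟨⟨h1, _⟩, h3⟩
      exact hc (by rw [← h3]; exact h1)
  have hR2 : prE μ (fun ω => ψ (V ω) = b ∧ Z ω = z) =
      ∑ v : ν, (if ψ v = b then prE μ (fun ω => V ω = v ∧ Z ω = z) else 0) := by
    rw [prE_sum_fiber μ _ V]
    refine Finset.sum_congr rfl fun v _ => ?_
    by_cases hc : ψ v = b
    · rw [if_pos hc]
      refine prE_congr μ fun ω => ?_
      constructor
      · rintro ⟨⟨_, h2⟩, h3⟩; exact ⟨h3, h2⟩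
      · rintro ⟨h1, h2⟩; exact ⟨⟨by rw [h1]; exact hc, h2⟩, h1⟩
    · rw [if_neg hc]
      refine prE_eq_zero μ fun ω => ?_
      rintro ⟨⟨h1, _⟩, h3⟩
      exact hc (by rw [← h3]; exact h1)
  rw [hL, hR1, hR2, Finset.sum_mul, Finset.sum_mul_sum]
  refine Finset.sum_congr rfl fun u _ => ?_
  rw [Finset.sum_mul]
  refine Finset.sum_congr rfl fun v _ => ?_
  by_cases h1 : φ u = a <;> by_cases h2 : ψ v = b <;>
    simp [h1, h2, h u v z]

end TINAux
namespace TINAux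

variable {Ω γ α₁ α₂ α₃ : Type}

lemma ci3_swap12 {μ : FinPMF Ω} {X₁ : Ω → α₁} {X₂ : Ω → α₂} {X₃ : Ω → α₃} {Q : Ω → γ}
    (h : CondIndepFun3 μ X₁ X₂ X₃ Q) : CondIndepFun3 μ X₂ X₁ X₃ Q := by
  intro x₂ x₁ x₃ q hq
  have h2 := h x₁ x₂ x₃ q hq
  have e : prE μ (fun ω => X₂ ω = x₂ ∧ X₁ ω = x₁ ∧ X₃ ω = x₃ ∧ Q ω = q) =
      prE μ (fun ω => X₁ ω = x₁ ∧ X₂ ω = x₂ ∧ X₃ ω = x₃ ∧ Q ω = q) :=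
    prE_congr μ fun ω => by tauto
  rw [e, h2]
  ring

lemma ci3_rot {μ : FinPMF Ω} {X₁ : Ω → α₁} {X₂ : Ω → α₂} {X₃ : Ω → α₃} {Q : Ω → γ}
    (h : CondIndepFun3 μ X₁ X₂ X₃ Q) : CondIndepFun3 μ X₃ X₁ X₂ Q := by
  intro x₃ x₁ x₂ q hq
  have h2 := h x₁ x₂ x₃ q hq
  have e : prE μ (fun ω => X₃ ω = x₃ ∧ X₁ ω = x₁ ∧ X₂ ω = x₂ ∧ Q ω = q) =
      prE μ (fun ω => X₁ ω = x₁ ∧ X₂ ω = x₂ ∧ X₃ ω = x₃ ∧ Q ω = q) :=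
    prE_congr μ fun ω => by tauto
  rw [e, h2]
  ring

lemma ci3_to_mi [Fintype α₁] {μ : FinPMF Ω} {X₁ : Ω → α₁} {X₂ : Ω → α₂} {X₃ : Ω → α₃}
    {Q : Ω → γ} (h : CondIndepFun3 μ X₁ X₂ X₃ Q) :
    MultIndep μ X₁ (fun ω => (X₂ ω, X₃ ω)) Q := by
  intro x₁ v q
  obtain ⟨x₂, x₃⟩ := v
  have hpair : prE μ (fun ω => X₁ ω = x₁ ∧ (X₂ ω, X₃ ω) = (x₂, x₃) ∧ Q ω = q) =
      prE μ (fun ω => X₁ ω = x₁ ∧ X₂ ω = x₂ ∧ X₃ ω = x₃ ∧ Q ω = q) :=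
    prE_congr μ fun ω => by
      rw [Prod.mk.injEq]
      tauto
  have hpair2 : prE μ (fun ω => (X₂ ω, X₃ ω) = (x₂, x₃) ∧ Q ω = q) =
      prE μ (fun ω => X₂ ω = x₂ ∧ X₃ ω = x₃ ∧ Q ω = q) :=
    prE_congr μ fun ω => by
      rw [Prod.mk.injEq]
      tauto
  rw [hpair, hpair2]
  rcases eq_or_lt_of_le (prX_nonneg μ Q q) with h0 | h0
  · have hz1 : prE μ (fun ω => X₂ ω = x₂ ∧ X₃ ω = x₃ ∧ Q ω = q) = 0 := by
      have hle : prE μ (fun ω => X₂ ω = x₂ ∧ X₃ ω = x₃ ∧ Q ω = q) ≤ prX μ Q q :=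
        prE_mono μ fun ω hh => hh.2.2
      have hge := prE_nonneg μ (fun ω => X₂ ω = x₂ ∧ X₃ ω = x₃ ∧ Q ω = q)
      linarith
    rw [hz1, ← h0]
    ring
  · -- the three-way product identity, for arbitrary first value
    have hterm : ∀ y₁ : α₁,
        prE μ (fun ω => X₁ ω = y₁ ∧ X₂ ω = x₂ ∧ X₃ ω = x₃ ∧ Q ω = q) * (prX μ Q q * prX μ Q q) =
        prE μ (fun ω => X₁ ω = y₁ ∧ Q ω = q) *
          (prE μ (fun ω => X₂ ω = x₂ ∧ Q ω = q) * prE μ (fun ω => X₃ ω = x₃ ∧ Q ω = q)) := by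
      intro y₁
      have h3 := h y₁ x₂ x₃ q h0
      have hq' : prX μ Q q ≠ 0 := h0.ne'
      field_simp at h3
      apply mul_right_cancel₀ hq'
      linear_combination (prX μ Q q) * h3
    have hQsum : ∑ y₁ : α₁, prE μ (fun ω => X₁ ω = y₁ ∧ Q ω = q) = prX μ Q q := by
      rw [show prX μ Q q = prE μ (fun ω => Q ω = q) from rfl, prE_sum_fiber μ _ X₁]
      exact Finset.sum_congr rfl fun x _ => prE_congr μ fun ω => by tauto
    have hsum : prE μ (fun ω => X₂ ω = x₂ ∧ X₃ ω = x₃ ∧ Q ω = q) =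
        ∑ y₁ : α₁, prE μ (fun ω => X₁ ω = y₁ ∧ X₂ ω = x₂ ∧ X₃ ω = x₃ ∧ Q ω = q) := by
      rw [prE_sum_fiber μ _ X₁]
      exact Finset.sum_congr rfl fun x _ => prE_congr μ fun ω => by tauto
    have h23 : prE μ (fun ω => X₂ ω = x₂ ∧ X₃ ω = x₃ ∧ Q ω = q) * (prX μ Q q * prX μ Q q) =
        prX μ Q q *
          (prE μ (fun ω => X₂ ω = x₂ ∧ Q ω = q) * prE μ (fun ω => X₃ ω = x₃ ∧ Q ω = q)) := by
      rw [hsum, Finset.sum_mul, Finset.sum_congr rfl fun y₁ _ => hterm y₁, ← Finset.sum_mul,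
        hQsum]
    -- goal : p123 * pQ = p1 * p23
    have key := hterm x₁
    have hq' : prX μ Q q ≠ 0 := h0.ne'
    have hcd : prE μ (fun ω => X₂ ω = x₂ ∧ X₃ ω = x₃ ∧ Q ω = q) * prX μ Q q =
        prE μ (fun ω => X₂ ω = x₂ ∧ Q ω = q) * prE μ (fun ω => X₃ ω = x₃ ∧ Q ω = q) := by
      apply mul_right_cancel₀ hq'
      linear_combination h23
    apply mul_right_cancel₀ hq'
    linear_combination key - (prE μ (fun ω => X₁ ω = x₁ ∧ Q ω = q)) * hcd

end TINAux
namespace TINAux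

variable {Ω 𝒬 A' B' C' A1 B1 C1 S1 Y1 : Type}

lemma condH_congr' (μ : FinPMF Ω) {α α' γ γ' : Type} {X : Ω → α} {X' : Ω → α'}
    {Z : Ω → γ} {Z' : Ω → γ'}
    (hZ : ∀ ω ω', Z ω = Z ω' ↔ Z' ω = Z' ω')
    (hX : ∀ ω ω', Z ω = Z ω' → (X ω = X ω' ↔ X' ω = X' ω')) :
    condH μ X Z = condH μ X' Z' := by
  simp only [condH]
  have e1 : entH μ (fun ω => (X ω, Z ω)) = entH μ (fun ω => (X' ω, Z' ω)) := by
    refine entH_congr μ fun ω ω' => ?_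
    simp only [Prod.mk.injEq]
    constructor
    · rintro ⟨h1, h2⟩
      exact ⟨((hX ω ω' h2).mp h1), (hZ ω ω').mp h2⟩
    · rintro ⟨h1, h2⟩
      have h2' : Z ω = Z ω' := (hZ ω ω').mpr h2
      exact ⟨(hX ω ω' h2').mpr h1, h2'⟩
  have e2 : entH μ Z = entH μ Z' := entH_congr μ hZ
  linarith

section Receiver

variable [Fintype A'] [Fintype B'] [Fintype C']
variable (μ : FinPMF Ω) (Q : Ω → 𝒬) (A : Ω → A') (B : Ω → B') (C : Ω → C')
variable (a : A' → A1) (b : B' → B1) (c : C' → C1) (k : B1 → C1 → S1) (f : A1 → S1 → Y1)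

/-- `I(A;Y|Q) = H(Y|Q) - H(S|Q)`. -/
lemma helper0 (hk : OneToOne k) (hf : OneToOne f)
    (hiA : MultIndep μ A (fun ω => (B ω, C ω)) Q) :
    condMI μ A (fun ω => f (a (A ω)) (k (b (B ω)) (c (C ω)))) Q =
      condH μ (fun ω => f (a (A ω)) (k (b (B ω)) (c (C ω)))) Q -
        condH μ (fun ω => k (b (B ω)) (c (C ω))) Q := by
  have d2 := condMI_D2 μ A (fun ω => f (a (A ω)) (k (b (B ω)) (c (C ω)))) Q
  have hcongr : condH μ (fun ω => f (a (A ω)) (k (b (B ω)) (c (C ω)))) (fun ω => (A ω, Q ω)) =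
      condH μ (fun ω => k (b (B ω)) (c (C ω))) (fun ω => (A ω, Q ω)) := by
    refine condH_congr' μ (fun ω ω' => Iff.rfl) (fun ω ω' hz => ?_)
    have hA : A ω = A ω' := congrArg Prod.fst hz
    constructor
    · intro hY
      have hY' : f (a (A ω)) (k (b (B ω)) (c (C ω))) = f (a (A ω)) (k (b (B ω')) (c (C ω'))) := by
        rw [hY, hA]
      exact hf.2 (a (A ω)) hY'
    · intro hS
      rw [hA, hS]
  have iAS : MultIndep μ A (fun ω => k (b (B ω)) (c (C ω))) Q :=
    hiA.comp id (fun p => k (b p.1) (c p.2))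
  have hdrop : condH μ (fun ω => k (b (B ω)) (c (C ω))) (fun ω => (A ω, Q ω)) =
      condH μ (fun ω => k (b (B ω)) (c (C ω))) Q :=
    condH_drop_of_indep μ iAS
  linarith

/-- `I(A;Y|Q) ≤ H(a(A)|Q)`. -/
lemma helper1 (hk : OneToOne k) (hf : OneToOne f)
    (hiA : MultIndep μ A (fun ω => (B ω, C ω)) Q) :
    condMI μ A (fun ω => f (a (A ω)) (k (b (B ω)) (c (C ω)))) Q ≤
      condH μ (fun ω => a (A ω)) Q := by
  rw [helper0 μ Q A B C a b c k f hk hf hiA]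
  have hmono : condH μ (fun ω => f (a (A ω)) (k (b (B ω)) (c (C ω)))) Q ≤
      condH μ (fun ω => (a (A ω), k (b (B ω)) (c (C ω)))) Q := by
    refine condH_mono μ Q fun ω ω' hp => ?_
    have h1 : a (A ω) = a (A ω') := congrArg Prod.fst hp
    have h2 : k (b (B ω)) (c (C ω)) = k (b (B ω')) (c (C ω')) := congrArg Prod.snd hp
    rw [h1, h2]
  have hsplit : condH μ (fun ω => (a (A ω), k (b (B ω)) (c (C ω)))) Q =
      condH μ (fun ω => a (A ω)) Q + condH μ (fun ω => k (b (B ω)) (c (C ω))) Q :=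
    condH_split_of_indep μ (hiA.comp a (fun p => k (b p.1) (c p.2)))
  linarith

/-- `I(A;Y|Q) + H(b(B)|Q) ≤ H(Y | c(C), Q)`. -/
lemma helper2 (hk : OneToOne k) (hf : OneToOne f)
    (hiA : MultIndep μ A (fun ω => (B ω, C ω)) Q)
    (hiB : MultIndep μ B (fun ω => (A ω, C ω)) Q) :
    condMI μ A (fun ω => f (a (A ω)) (k (b (B ω)) (c (C ω)))) Q +
      condH μ (fun ω => b (B ω)) Q ≤
    condH μ (fun ω => f (a (A ω)) (k (b (B ω)) (c (C ω)))) (fun ω => (c (C ω), Q ω)) := by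
  have s1 := condMI_D2 μ (fun ω => a (A ω))
    (fun ω => f (a (A ω)) (k (b (B ω)) (c (C ω)))) (fun ω => (c (C ω), Q ω))
  have s2 : condH μ (fun ω => f (a (A ω)) (k (b (B ω)) (c (C ω))))
      (fun ω => (a (A ω), (c (C ω), Q ω))) =
      condH μ (fun ω => b (B ω)) (fun ω => (a (A ω), (c (C ω), Q ω))) := by
    refine condH_congr' μ (fun ω ω' => Iff.rfl) (fun ω ω' hz => ?_)
    have h1 : a (A ω) = a (A ω') := congrArg Prod.fst hz
    have h3 : c (C ω) = c (C ω') := congrArg Prod.fst (congrArg Prod.snd hz)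
    constructor
    · intro hY
      have hY' : f (a (A ω)) (k (b (B ω)) (c (C ω))) =
          f (a (A ω)) (k (b (B ω')) (c (C ω))) := by
        rw [hY, h1, h3]
      have hk' : k (b (B ω)) (c (C ω)) = k (b (B ω')) (c (C ω)) := hf.2 (a (A ω)) hY'
      exact hk.1 (c (C ω)) hk'
    · intro hB
      rw [h1, h3, hB]
  have s3 : condH μ (fun ω => b (B ω)) (fun ω => (a (A ω), (c (C ω), Q ω))) =
      condH μ (fun ω => b (B ω)) Q := by
    have i1 : MultIndep μ (fun ω => (a (A ω), c (C ω))) (fun ω => b (B ω)) Q :=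
      (hiB.comp b (fun p => (a p.1, c p.2))).symm
    have hdrop := condH_drop_of_indep μ i1
    have hregroup : condH μ (fun ω => b (B ω)) (fun ω => ((a (A ω), c (C ω)), Q ω)) =
        condH μ (fun ω => b (B ω)) (fun ω => (a (A ω), (c (C ω), Q ω))) := by
      refine condH_congr' μ (fun ω ω' => ?_) (fun ω ω' _ => Iff.rfl)
      simp only [Prod.mk.injEq]
      tauto
    rw [← hregroup, hdrop]
  have s4 := condMI_chain μ (fun ω => a (A ω))
    (fun ω => f (a (A ω)) (k (b (B ω)) (c (C ω)))) (fun ω => c (C ω)) Q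
  have s5 : condMI μ (fun ω => a (A ω)) (fun ω => c (C ω)) Q = 0 :=
    condMI_eq_zero_of_indep μ (hiA.comp a (fun p => c p.2))
  have s6 := condMI_mono μ (fun ω => a (A ω))
    (fun ω => f (a (A ω)) (k (b (B ω)) (c (C ω)))) (fun ω => c (C ω)) Q
  have s7 : condMI μ (fun ω => a (A ω)) (fun ω => f (a (A ω)) (k (b (B ω)) (c (C ω)))) Q =
      condH μ (fun ω => f (a (A ω)) (k (b (B ω)) (c (C ω)))) Q -
        condH μ (fun ω => k (b (B ω)) (c (C ω))) Q := by
    have d2 := condMI_D2 μ (fun ω => a (A ω))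
      (fun ω => f (a (A ω)) (k (b (B ω)) (c (C ω)))) Q
    have hcongr : condH μ (fun ω => f (a (A ω)) (k (b (B ω)) (c (C ω))))
        (fun ω => (a (A ω), Q ω)) =
        condH μ (fun ω => k (b (B ω)) (c (C ω))) (fun ω => (a (A ω), Q ω)) := by
      refine condH_congr' μ (fun ω ω' => Iff.rfl) (fun ω ω' hz => ?_)
      have h1 : a (A ω) = a (A ω') := congrArg Prod.fst hz
      constructor
      · intro hY
        have hY' : f (a (A ω)) (k (b (B ω)) (c (C ω))) =
            f (a (A ω)) (k (b (B ω')) (c (C ω'))) := by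
          rw [hY, h1]
        exact hf.2 (a (A ω)) hY'
      · intro hS
        rw [h1, hS]
    have hdrop : condH μ (fun ω => k (b (B ω)) (c (C ω))) (fun ω => (a (A ω), Q ω)) =
        condH μ (fun ω => k (b (B ω)) (c (C ω))) Q :=
      condH_drop_of_indep μ (hiA.comp a (fun p => k (b p.1) (c p.2)))
    linarith
  have s8 := helper0 μ Q A B C a b c k f hk hf hiA
  linarith

lemma receiver (hk : OneToOne k) (hf : OneToOne f)
    (hiA : MultIndep μ A (fun ω => (B ω, C ω)) Q)
    (hiB : MultIndep μ B (fun ω => (A ω, C ω)) Q)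
    (hiC : MultIndep μ C (fun ω => (A ω, B ω)) Q)
    {R₁ R₂ R₃ : ℝ} (hR2 : 0 ≤ R₂) (hR3 : 0 ≤ R₃)
    (hR1 : R₁ < condMI μ A (fun ω => f (a (A ω)) (k (b (B ω)) (c (C ω)))) Q) :
    (R₁ < condH μ (fun ω => a (A ω)) Q) ∧
    (R₁ + min R₂ (condH μ (fun ω => b (B ω)) Q) <
      condH μ (fun ω => f (a (A ω)) (k (b (B ω)) (c (C ω)))) (fun ω => (c (C ω), Q ω))) ∧
    (R₁ + min R₃ (condH μ (fun ω => c (C ω)) Q) <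
      condH μ (fun ω => f (a (A ω)) (k (b (B ω)) (c (C ω)))) (fun ω => (b (B ω), Q ω))) ∧
    (R₁ + min (min (R₂ + R₃) (R₂ + condH μ (fun ω => c (C ω)) Q))
        (min (condH μ (fun ω => b (B ω)) Q + R₃)
          (condH μ (fun ω => k (b (B ω)) (c (C ω))) Q)) <
      condH μ (fun ω => f (a (A ω)) (k (b (B ω)) (c (C ω)))) Q) := by
  refine ⟨?_, ?_, ?_, ?_⟩
  · exact lt_of_lt_of_le hR1 (helper1 μ Q A B C a b c k f hk hf hiA)
  · have h2 := helper2 μ Q A B C a b c k f hk hf hiA hiB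
    have hmin := min_le_right R₂ (condH μ (fun ω => b (B ω)) Q)
    linarith
  · have hiA' : MultIndep μ A (fun ω => (C ω, B ω)) Q := hiA.comp id Prod.swap
    have hiC' : MultIndep μ C (fun ω => (A ω, B ω)) Q := hiC
    have h2 : condMI μ A (fun ω => f (a (A ω)) (k (b (B ω)) (c (C ω)))) Q +
        condH μ (fun ω => c (C ω)) Q ≤
        condH μ (fun ω => f (a (A ω)) (k (b (B ω)) (c (C ω)))) (fun ω => (b (B ω), Q ω)) :=
      helper2 μ Q A C B a c b (fun c' b' => k b' c') f ⟨hk.2, hk.1⟩ hf hiA' hiC'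
    have hmin := min_le_right R₃ (condH μ (fun ω => c (C ω)) Q)
    linarith
  · have h0 := helper0 μ Q A B C a b c k f hk hf hiA
    have hmin : min (min (R₂ + R₃) (R₂ + condH μ (fun ω => c (C ω)) Q))
        (min (condH μ (fun ω => b (B ω)) Q + R₃)
          (condH μ (fun ω => k (b (B ω)) (c (C ω))) Q)) ≤
        condH μ (fun ω => k (b (B ω)) (c (C ω))) Q :=
      le_trans (min_le_right _ _) (min_le_right _ _)
    linarith

end Receiver

end TINAux
/-- For any fixed three-user-pair deterministic interference channel,
the treating-interference-as-noise region is included in the interference-decoding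
region: `ℛ_TIN ⊆ ℛ_ID`. -/
theorem tin_subset_interference_decoding
    {𝒳₁ 𝒳₂ 𝒳₃ 𝒳₁₁ 𝒳₁₂ 𝒳₁₃ 𝒳₂₁ 𝒳₂₂ 𝒳₂₃ 𝒳₃₁ 𝒳₃₂ 𝒳₃₃ 𝒮₁ 𝒮₂ 𝒮₃ 𝒴₁ 𝒴₂ 𝒴₃ : Type}
    [Fintype 𝒳₁] [Nonempty 𝒳₁]
    [Fintype 𝒳₂] [Nonempty 𝒳₂]
    [Fintype 𝒳₃] [Nonempty 𝒳₃]
    [Fintype 𝒳₁₁] [Nonempty 𝒳₁₁]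
    [Fintype 𝒳₁₂] [Nonempty 𝒳₁₂]
    [Fintype 𝒳₁₃] [Nonempty 𝒳₁₃]
    [Fintype 𝒳₂₁] [Nonempty 𝒳₂₁]
    [Fintype 𝒳₂₂] [Nonempty 𝒳₂₂]
    [Fintype 𝒳₂₃] [Nonempty 𝒳₂₃]
    [Fintype 𝒳₃₁] [Nonempty 𝒳₃₁]
    [Fintype 𝒳₃₂] [Nonempty 𝒳₃₂]
    [Fintype 𝒳₃₃] [Nonempty 𝒳₃₃]
    [Fintype 𝒮₁] [Nonempty 𝒮₁]
    [Fintype 𝒮₂] [Nonempty 𝒮₂]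
    [Fintype 𝒮₃] [Nonempty 𝒮₃]
    [Fintype 𝒴₁] [Nonempty 𝒴₁]
    [Fintype 𝒴₂] [Nonempty 𝒴₂]
    [Fintype 𝒴₃] [Nonempty 𝒴₃]
    (g₁₁ : 𝒳₁ → 𝒳₁₁) (g₁₂ : 𝒳₁ → 𝒳₁₂) (g₁₃ : 𝒳₁ → 𝒳₁₃)
    (g₂₁ : 𝒳₂ → 𝒳₂₁) (g₂₂ : 𝒳₂ → 𝒳₂₂) (g₂₃ : 𝒳₂ → 𝒳₂₃)
    (g₃₁ : 𝒳₃ → 𝒳₃₁) (g₃₂ : 𝒳₃ → 𝒳₃₂) (g₃₃ : 𝒳₃ → 𝒳₃₃)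
    (h₁ : 𝒳₂₁ → 𝒳₃₁ → 𝒮₁) (h₂ : 𝒳₁₂ → 𝒳₃₂ → 𝒮₂) (h₃ : 𝒳₁₃ → 𝒳₂₃ → 𝒮₃)
    (f₁ : 𝒳₁₁ → 𝒮₁ → 𝒴₁) (f₂ : 𝒳₂₂ → 𝒮₂ → 𝒴₂) (f₃ : 𝒳₃₃ → 𝒮₃ → 𝒴₃)
    (hh₁ : OneToOne h₁) (hh₂ : OneToOne h₂) (hh₃ : OneToOne h₃)
    (hf₁ : OneToOne f₁) (hf₂ : OneToOne f₂) (hf₃ : OneToOne f₃) :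
    {r : ℝ × ℝ × ℝ | 0 ≤ r.1 ∧ 0 ≤ r.2.1 ∧ 0 ≤ r.2.2 ∧
      ∃ (Ω 𝒬 : Type) (_ : Fintype 𝒬) (_ : Nonempty 𝒬) (μ : FinPMF Ω)
        (Q : Ω → 𝒬) (X₁ : Ω → 𝒳₁) (X₂ : Ω → 𝒳₂) (X₃ : Ω → 𝒳₃),
        CondIndepFun3 μ X₁ X₂ X₃ Q ∧
        r.1 < condMI μ X₁ (fun ω => f₁ (g₁₁ (X₁ ω)) (h₁ (g₂₁ (X₂ ω)) (g₃₁ (X₃ ω)))) Q ∧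
        r.2.1 < condMI μ X₂ (fun ω => f₂ (g₂₂ (X₂ ω)) (h₂ (g₁₂ (X₁ ω)) (g₃₂ (X₃ ω)))) Q ∧
        r.2.2 < condMI μ X₃ (fun ω => f₃ (g₃₃ (X₃ ω)) (h₃ (g₁₃ (X₁ ω)) (g₂₃ (X₂ ω)))) Q} ⊆
    {r : ℝ × ℝ × ℝ | 0 ≤ r.1 ∧ 0 ≤ r.2.1 ∧ 0 ≤ r.2.2 ∧
      ∃ (Ω 𝒬 : Type) (_ : Fintype 𝒬) (_ : Nonempty 𝒬) (μ : FinPMF Ω)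
        (Q : Ω → 𝒬) (X₁ : Ω → 𝒳₁) (X₂ : Ω → 𝒳₂) (X₃ : Ω → 𝒳₃),
        CondIndepFun3 μ X₁ X₂ X₃ Q ∧
        r.1 < condH μ (fun ω => g₁₁ (X₁ ω)) Q ∧
        r.1 + min r.2.1 (condH μ (fun ω => g₂₁ (X₂ ω)) Q) < condH μ (fun ω => f₁ (g₁₁ (X₁ ω)) (h₁ (g₂₁ (X₂ ω)) (g₃₁ (X₃ ω)))) (fun ω => (g₃₁ (X₃ ω), Q ω)) ∧
        r.1 + min r.2.2 (condH μ (fun ω => g₃₁ (X₃ ω)) Q) < condH μ (fun ω => f₁ (g₁₁ (X₁ ω)) (h₁ (g₂₁ (X₂ ω)) (g₃₁ (X₃ ω)))) (fun ω => (g₂₁ (X₂ ω), Q ω)) ∧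
        r.1 + min (min (r.2.1 + r.2.2) (r.2.1 + condH μ (fun ω => g₃₁ (X₃ ω)) Q)) (min (condH μ (fun ω => g₂₁ (X₂ ω)) Q + r.2.2) (condH μ (fun ω => h₁ (g₂₁ (X₂ ω)) (g₃₁ (X₃ ω))) Q)) < condH μ (fun ω => f₁ (g₁₁ (X₁ ω)) (h₁ (g₂₁ (X₂ ω)) (g₃₁ (X₃ ω)))) Q ∧
        r.2.1 < condH μ (fun ω => g₂₂ (X₂ ω)) Q ∧
        r.2.1 + min r.2.2 (condH μ (fun ω => g₃₂ (X₃ ω)) Q) < condH μ (fun ω => f₂ (g₂₂ (X₂ ω)) (h₂ (g₁₂ (X₁ ω)) (g₃₂ (X₃ ω)))) (fun ω => (g₁₂ (X₁ ω), Q ω)) ∧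
        r.2.1 + min r.1 (condH μ (fun ω => g₁₂ (X₁ ω)) Q) < condH μ (fun ω => f₂ (g₂₂ (X₂ ω)) (h₂ (g₁₂ (X₁ ω)) (g₃₂ (X₃ ω)))) (fun ω => (g₃₂ (X₃ ω), Q ω)) ∧
        r.2.1 + min (min (r.2.2 + r.1) (r.2.2 + condH μ (fun ω => g₁₂ (X₁ ω)) Q)) (min (condH μ (fun ω => g₃₂ (X₃ ω)) Q + r.1) (condH μ (fun ω => h₂ (g₁₂ (X₁ ω)) (g₃₂ (X₃ ω))) Q)) < condH μ (fun ω => f₂ (g₂₂ (X₂ ω)) (h₂ (g₁₂ (X₁ ω)) (g₃₂ (X₃ ω)))) Q ∧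
        r.2.2 < condH μ (fun ω => g₃₃ (X₃ ω)) Q ∧
        r.2.2 + min r.1 (condH μ (fun ω => g₁₃ (X₁ ω)) Q) < condH μ (fun ω => f₃ (g₃₃ (X₃ ω)) (h₃ (g₁₃ (X₁ ω)) (g₂₃ (X₂ ω)))) (fun ω => (g₂₃ (X₂ ω), Q ω)) ∧
        r.2.2 + min r.2.1 (condH μ (fun ω => g₂₃ (X₂ ω)) Q) < condH μ (fun ω => f₃ (g₃₃ (X₃ ω)) (h₃ (g₁₃ (X₁ ω)) (g₂₃ (X₂ ω)))) (fun ω => (g₁₃ (X₁ ω), Q ω)) ∧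
        r.2.2 + min (min (r.1 + r.2.1) (r.1 + condH μ (fun ω => g₂₃ (X₂ ω)) Q)) (min (condH μ (fun ω => g₁₃ (X₁ ω)) Q + r.2.1) (condH μ (fun ω => h₃ (g₁₃ (X₁ ω)) (g₂₃ (X₂ ω))) Q)) < condH μ (fun ω => f₃ (g₃₃ (X₃ ω)) (h₃ (g₁₃ (X₁ ω)) (g₂₃ (X₂ ω)))) Q} := by
  intro r hr
  simp only [Set.mem_setOf_eq] at hr ⊢
  obtain ⟨hr1, hr2, hr3, Ω, 𝒬, i1, i2, μ, Q, X₁, X₂, X₃, hCI, hI1, hI2, hI3⟩ := hr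
  refine ⟨hr1, hr2, hr3, Ω, 𝒬, i1, i2, μ, Q, X₁, X₂, X₃, hCI, ?_⟩
  have mi1 : TINAux.MultIndep μ X₁ (fun ω => (X₂ ω, X₃ ω)) Q := TINAux.ci3_to_mi hCI
  have mi2 : TINAux.MultIndep μ X₂ (fun ω => (X₁ ω, X₃ ω)) Q :=
    TINAux.ci3_to_mi (TINAux.ci3_swap12 hCI)
  have mi3 : TINAux.MultIndep μ X₃ (fun ω => (X₁ ω, X₂ ω)) Q :=
    TINAux.ci3_to_mi (TINAux.ci3_rot hCI)
  have r1 := TINAux.receiver μ Q X₁ X₂ X₃ g₁₁ g₂₁ g₃₁ h₁ f₁ hh₁ hf₁ mi1 mi2 mi3 hr2 hr3 hI1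
  have hiA2 : TINAux.MultIndep μ X₂ (fun ω => (X₃ ω, X₁ ω)) Q := mi2.comp id Prod.swap
  have hiB2 : TINAux.MultIndep μ X₃ (fun ω => (X₂ ω, X₁ ω)) Q := mi3.comp id Prod.swap
  have hI2' : r.2.1 < condMI μ X₂
      (fun ω => f₂ (g₂₂ (X₂ ω)) ((fun x y => h₂ y x) (g₃₂ (X₃ ω)) (g₁₂ (X₁ ω)))) Q := hI2
  have r2 := TINAux.receiver μ Q X₂ X₃ X₁ g₂₂ g₃₂ g₁₂ (fun x y => h₂ y x) f₂
    ⟨hh₂.2, hh₂.1⟩ hf₂ hiA2 hiB2 mi1 hr3 hr1 hI2'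
  have hiB3 : TINAux.MultIndep μ X₁ (fun ω => (X₃ ω, X₂ ω)) Q := mi1.comp id Prod.swap
  have hiC3 : TINAux.MultIndep μ X₂ (fun ω => (X₃ ω, X₁ ω)) Q := mi2.comp id Prod.swap
  have r3 := TINAux.receiver μ Q X₃ X₁ X₂ g₃₃ g₁₃ g₂₃ h₃ f₃ hh₃ hf₃ mi3 hiB3 hiC3 hr1 hr2 hI3
  exact ⟨r1.1, r1.2.1, r1.2.2.1, r1.2.2.2,
    r2.1, r2.2.1, r2.2.2.1, r2.2.2.2,
    r3.1, r3.2.1, r3.2.2.1, r3.2.2.2⟩
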